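/- Fix reals μ, σ, α > 0 with μ ≥ 1 + σ·√(3/2) and α ≤ 17σ² / (54·φ((μ−1)/σ)), where φ(z) := (4z² − 2)·exp(−z²). Define g(x) = |x| + log(1 + |x|), h(x) = exp(−((|x| − μ)/σ)²), and f(x) = g(x) + α·(h(x) − h(0)) for x ∈ ℝ. Then Δ_f(x, y) ≥ 0 for all (x, y) ∈ ℝ² with 2|x| + |y| ≤ 1, where Δ_f(x, y) := 2·f(x) + f(y) − f(2x + y). -/

import Mathlib

open Real Set

private lemma myAnti {f f' : ℝ → ℝ} (hf : ∀ t, HasDerivAt f (f' t) t)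
    {s : Set ℝ} (hs : Convex ℝ s) (h : ∀ t ∈ s, f' t ≤ 0) : AntitoneOn f s := by
  apply antitoneOn_of_deriv_nonpos hs
  · exact (fun t _ => (hf t).differentiableAt.continuousAt.continuousWithinAt)
  · exact fun t ht => (hf t).differentiableAt.differentiableWithinAt
  · intro t ht
    rw [(hf t).deriv]
    exact h t (interior_subset ht)

private lemma myMono {f f' : ℝ → ℝ} (hf : ∀ t, HasDerivAt f (f' t) t)
    {s : Set ℝ} (hs : Convex ℝ s) (h : ∀ t ∈ s, 0 ≤ f' t) : MonotoneOn f s := by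
  apply monotoneOn_of_deriv_nonneg hs
  · exact (fun t _ => (hf t).differentiableAt.continuousAt.continuousWithinAt)
  · exact fun t ht => (hf t).differentiableAt.differentiableWithinAt
  · intro t ht
    rw [(hf t).deriv]
    exact h t (interior_subset ht)

private lemma myIncr {q q' : ℝ → ℝ} (hq : ∀ t, HasDerivAt q (q' t) t)
    (hanti : AntitoneOn q' (Set.Icc 0 1)) {a y : ℝ} (ha : 0 ≤ a) (hy : 0 ≤ y)
    (hya : y + a ≤ 1) : q (y + a) - q y ≤ q a - q 0 := by
  have hr : ∀ t : ℝ, HasDerivAt (fun t => q (t + a) - q t) (q' (t + a) - q' t) t := by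
    intro t
    have h1 : HasDerivAt (fun t : ℝ => q (t + a)) (q' (t + a)) t := by
      simpa [Function.comp_def] using (hq (t + a)).comp t ((hasDerivAt_id t).add_const a)
    exact h1.sub (hq t)
  have hranti : AntitoneOn (fun t => q (t + a) - q t) (Set.Icc 0 (1 - a)) := by
    apply myAnti hr (convex_Icc _ _)
    intro t ht
    have h1 : t ∈ Set.Icc (0:ℝ) 1 := ⟨ht.1, by linarith [ht.2]⟩
    have h2 : t + a ∈ Set.Icc (0:ℝ) 1 := ⟨by linarith [ht.1], by linarith [ht.2]⟩
    have := hanti h1 h2 (by linarith)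
    linarith
  have h0 : (0:ℝ) ∈ Set.Icc (0:ℝ) (1 - a) := ⟨le_refl _, by linarith⟩
  have hyy : y ∈ Set.Icc (0:ℝ) (1 - a) := ⟨hy, by linarith⟩
  have := hranti h0 hyy hy
  simpa using this

open Real Set

-- exp-polynomial decrease
private lemma myKey {v w : ℝ} (hw : 3/2 ≤ w) (hvw : w ≤ v) :
    (4*v - 2) * Real.exp (-v) ≤ (4*w - 2) * Real.exp (-w) := by
  have h1 : v - w + 1 ≤ Real.exp (v - w) := by simpa using Real.add_one_le_exp (v - w)
  have h4 : (4*v - 2 : ℝ) ≤ (4*w - 2) * Real.exp (v - w) := by nlinarith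
  have h2 : (0:ℝ) < Real.exp (-v) := Real.exp_pos _
  calc (4*v - 2) * Real.exp (-v) ≤ ((4*w - 2) * Real.exp (v - w)) * Real.exp (-v) :=
        mul_le_mul_of_nonneg_right h4 h2.le
    _ = (4*w - 2) * Real.exp (-w) := by
        rw [mul_assoc, ← Real.exp_add]; congr 2; ring

private lemma myLogKey {α M a b c : ℝ} {ψ : ℝ → ℝ}
    (ha : 0 ≤ a) (hb : 0 ≤ b) (hc : 0 ≤ c) (hcab : c ≤ 2*a + b) (hab : 2*a + b ≤ 1)
    (hα : 0 ≤ α) (hαM : α * M ≤ 17/54)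
    (hmono : ψ c ≤ ψ (2*a + b))
    (hE : -(M*(a^2 + 2*a*b)) ≤ 2*ψ a + ψ b - ψ (2*a + b) - 2*ψ 0) :
    0 ≤ (2*a + b - c) + (2*Real.log (1+a) + Real.log (1+b) - Real.log (1+c))
      + α*(2*ψ a + ψ b - ψ c - 2*ψ 0) := by
  have hpc : (0:ℝ) < 1 + c := by linarith
  have hpa : (0:ℝ) < 1 + a := by linarith
  have hpb : (0:ℝ) < 1 + b := by linarith
  have hpq : (0:ℝ) < 1 + (2*a + b) := by linarith
  have hs : 0 ≤ a^2 + 2*a*b := by positivity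
  -- log part 1
  have Hlog1 : Real.log (1 + c) ≤ Real.log (1 + (2*a + b)) := by
    apply Real.log_le_log (by linarith)
    linarith
  -- log part 2
  set P : ℝ := (1+a)^2 * (1+b) with hP_def
  have hPpos : 0 < P := by positivity
  have hP54 : P ≤ 54/17 := by
    nlinarith [sq_nonneg (3*a - 1), mul_nonneg (mul_nonneg ha ha) hb,
      mul_nonneg (sq_nonneg (3*a-1)) ha, mul_nonneg (sq_nonneg (3*a-1)) hb,
      mul_nonneg (mul_nonneg hb (sq_nonneg (3*a-1))) ha]
  have hlogP : 2*Real.log (1+a) + Real.log (1+b) = Real.log P := by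
    have h1 : ((1:ℝ)+a)^2 ≠ 0 := by positivity
    have h2 : ((1:ℝ)+b) ≠ 0 := by positivity
    rw [hP_def, Real.log_mul h1 h2, Real.log_pow]
    push_cast; ring
  have Hlog2 : (17/54)*(a^2 + 2*a*b) ≤ Real.log P - Real.log (1 + (2*a + b)) := by
    have h1 := Real.log_le_sub_one_of_pos (show (0:ℝ) < (1 + (2*a+b))/P by positivity)
    rw [Real.log_div (by positivity) hPpos.ne'] at h1
    have h2 : (17/54)*(a^2 + 2*a*b) ≤ 1 - (1 + (2*a+b))/P := by
      rw [sub_div' hPpos.ne', le_div_iff₀ hPpos]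
      have exp1 : P - (1 + (2*a+b)) = (a^2 + 2*a*b) + a^2*b := by rw [hP_def]; ring
      nlinarith [mul_le_mul_of_nonneg_left hP54 hs, mul_nonneg (mul_nonneg ha ha) hb]
    linarith
  -- combine
  have A1 : α*(2*ψ a + ψ b - ψ (2*a+b) - 2*ψ 0) ≤ α*(2*ψ a + ψ b - ψ c - 2*ψ 0) :=
    mul_le_mul_of_nonneg_left (by linarith) hα
  have A2 : α*(-(M*(a^2 + 2*a*b))) ≤ α*(2*ψ a + ψ b - ψ (2*a+b) - 2*ψ 0) :=
    mul_le_mul_of_nonneg_left hE hα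
  have A4 : -((17:ℝ)/54)*(a^2 + 2*a*b) ≤ α*(-(M*(a^2 + 2*a*b))) := by nlinarith
  linarith

section Gauss

variable (μ σ : ℝ)

private noncomputable def ψf : ℝ → ℝ := fun t => Real.exp (-((t - μ)^2 / σ^2))
private noncomputable def ψf' : ℝ → ℝ := fun t => Real.exp (-((t - μ)^2 / σ^2)) * (-(2*(t - μ)) / σ^2)

private lemma hd_inner : ∀ t : ℝ, HasDerivAt (fun t => -((t - μ)^2 / σ^2)) (-(2*(t - μ)) / σ^2) t := by
  intro t
  have h1 : HasDerivAt (fun t : ℝ => t - μ) 1 t := (hasDerivAt_id t).sub_const μ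
  have h2 : HasDerivAt (fun t : ℝ => (t - μ)^2) (2*(t - μ)) t := by
    simpa using h1.fun_pow 2
  simpa [neg_div] using (h2.div_const (σ^2)).fun_neg

private lemma hψd : ∀ t : ℝ, HasDerivAt (ψf μ σ) (ψf' μ σ t) t := fun t => (hd_inner μ σ t).exp

private lemma hψd' : ∀ t : ℝ, HasDerivAt (ψf' μ σ)
    (Real.exp (-((t - μ)^2 / σ^2)) * ((-(2*(t - μ)) / σ^2)^2 + -2/σ^2)) t := by
  intro t
  have hlin : HasDerivAt (fun t : ℝ => -(2*(t - μ)) / σ^2) (-2/σ^2) t := by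
    have h1 : HasDerivAt (fun t : ℝ => t - μ) 1 t := (hasDerivAt_id t).sub_const μ
    have h2 := ((h1.const_mul 2).neg.div_const (σ^2))
    simpa [neg_div] using h2
  have h3 := (hψd μ σ t).mul hlin
  refine h3.congr_deriv ?_
  simp only [ψf, ψf']
  ring

end Gauss

set_option maxHeartbeats 1000000 in
theorem Delta_f_nonneg_region_B (μ σ α : ℝ) (hμ : 0 < μ) (hσ : 0 < σ) (hα : 0 < α)
    (φ : ℝ → ℝ) (hφ : ∀ z : ℝ, φ z = (4 * z ^ 2 - 2) * Real.exp (-z ^ 2))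
    (hμσ : 1 + σ * Real.sqrt (3 / 2) ≤ μ)
    (hαle : α ≤ 17 * σ ^ 2 / (54 * φ ((μ - 1) / σ)))
    (g h f : ℝ → ℝ)
    (hg : ∀ x : ℝ, g x = |x| + Real.log (1 + |x|))
    (hh : ∀ x : ℝ, h x = Real.exp (-((|x| - μ) / σ) ^ 2))
    (hf : ∀ x : ℝ, f x = g x + α * (h x - h 0)) :
    ∀ x y : ℝ, 2 * |x| + |y| ≤ 1 → 0 ≤ 2 * f x + f y - f (2 * x + y) := by
  intro x y hxy
  have hsqrt : (0:ℝ) < Real.sqrt (3/2) := Real.sqrt_pos.mpr (by norm_num)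
  have hμ1 : 1 < μ := by nlinarith [mul_pos hσ hsqrt]
  set z : ℝ := (μ - 1) / σ with hz_def
  have hz : Real.sqrt (3/2) ≤ z := by
    rw [hz_def, le_div_iff₀ hσ]
    nlinarith
  have hz2 : 3/2 ≤ z^2 := by
    nlinarith [Real.sq_sqrt (show (0:ℝ) ≤ 3/2 by norm_num), Real.sqrt_nonneg (3/2)]
  have hw2 : z^2 = (μ-1)^2/σ^2 := div_pow _ _ 2
  have hφpos : 0 < (4*z^2 - 2) * Real.exp (-z^2) :=
    mul_pos (by linarith) (Real.exp_pos _)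
  set M : ℝ := (4*z^2 - 2) * Real.exp (-z^2) / σ^2 with hM_def
  have hσ2 : (0:ℝ) < σ^2 := pow_pos hσ 2
  have hMnonneg : 0 ≤ M := le_of_lt (div_pos hφpos hσ2)
  have hαM : α * M ≤ 17/54 := by
    rw [hφ] at hαle
    have h1 : α * ((4*z^2 - 2) * Real.exp (-z^2)) ≤ 17*σ^2/54 := by
      calc α * ((4*z^2 - 2) * Real.exp (-z^2))
          ≤ (17 * σ ^ 2 / (54 * ((4*z^2 - 2) * Real.exp (-z^2)))) * ((4*z^2 - 2) * Real.exp (-z^2)) :=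
            mul_le_mul_of_nonneg_right hαle hφpos.le
        _ = 17*σ^2/54 := by field_simp [(show (0:ℝ) < 4*z^2-2 by linarith).ne', (Real.exp_pos (-z^2)).ne']
    have h2 : α * M = (α * ((4*z^2 - 2) * Real.exp (-z^2)))/σ^2 := by
      rw [hM_def]; ring
    rw [h2]
    calc (α * ((4*z^2 - 2) * Real.exp (-z^2)))/σ^2 ≤ (17*σ^2/54)/σ^2 :=
          (div_le_div_iff_of_pos_right hσ2).mpr h1
      _ = 17/54 := by field_simp
  -- second derivative bound
  have hψ''le : ∀ t ∈ Set.Icc (0:ℝ) 1,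
      Real.exp (-((t - μ)^2 / σ^2)) * ((-(2*(t - μ)) / σ^2)^2 + -2/σ^2) ≤ M := by
    intro t ht
    have hvw : (μ-1)^2 ≤ (t-μ)^2 := by nlinarith [ht.1, ht.2]
    have hv : z^2 ≤ (t-μ)^2/σ^2 := by
      rw [hw2]
      exact (div_le_div_iff_of_pos_right hσ2).mpr hvw
    have hkey := myKey hz2 hv
    have heq : Real.exp (-((t - μ)^2 / σ^2)) * ((-(2*(t - μ)) / σ^2)^2 + -2/σ^2)
        = ((4*((t-μ)^2/σ^2) - 2) * Real.exp (-((t-μ)^2/σ^2)))/σ^2 := by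
      field_simp
      ring
    rw [heq, hM_def]
    exact (div_le_div_iff_of_pos_right hσ2).mpr hkey
  -- monotonicity of ψ on [0,1]
  have hmono : MonotoneOn (ψf μ σ) (Set.Icc 0 1) := by
    apply myMono (hψd μ σ) (convex_Icc _ _)
    intro t ht
    apply mul_nonneg (Real.exp_pos _).le
    apply div_nonneg _ hσ2.le
    have := ht.2
    nlinarith
  -- concavity-type bound via q
  have hsq : ∀ t : ℝ, HasDerivAt (fun u : ℝ => M/2*u^2) (M*t) t := by
    intro t
    have h := (hasDerivAt_pow 2 t).const_mul (M/2)
    refine h.congr_deriv ?_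
    push_cast; ring
  have hqd : ∀ t : ℝ, HasDerivAt (fun u => ψf μ σ u - M/2*u^2) (ψf' μ σ t - M*t) t :=
    fun t => (hψd μ σ t).sub (hsq t)
  have hq'd : ∀ t : ℝ, HasDerivAt (fun u => ψf' μ σ u - M*u)
      (Real.exp (-((t - μ)^2 / σ^2)) * ((-(2*(t - μ)) / σ^2)^2 + -2/σ^2) - M) t := by
    intro t
    have h1 : HasDerivAt (fun u : ℝ => M*u) M t := by
      simpa using (hasDerivAt_id t).const_mul M
    exact (hψd' μ σ t).sub h1
  have hq'anti : AntitoneOn (fun u => ψf' μ σ u - M*u) (Set.Icc 0 1) := by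
    apply myAnti hq'd (convex_Icc _ _)
    intro t ht
    have := hψ''le t ht
    linarith
  -- abs facts
  have ha : (0:ℝ) ≤ |x| := abs_nonneg x
  have hb : (0:ℝ) ≤ |y| := abs_nonneg y
  have hc0 : (0:ℝ) ≤ |2*x + y| := abs_nonneg _
  have hcab : |2*x + y| ≤ 2*|x| + |y| := by
    calc |2*x + y| ≤ |2*x| + |y| := abs_add_le _ _
      _ = 2*|x| + |y| := by rw [abs_mul]; norm_num
  -- hE
  have i1 := myIncr hqd hq'anti (a := |x|) (y := |y|) ha hb (by linarith)
  have i2 := myIncr hqd hq'anti (a := |x|) (y := |x| + |y|) ha (by positivity) (by linarith)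
  rw [show |y| + |x| = |x| + |y| from add_comm _ _] at i1
  rw [show |x| + |y| + |x| = 2*|x| + |y| by ring] at i2
  have hE : -(M * (|x| ^ 2 + 2 * |x| * |y|)) ≤
      2*(ψf μ σ) |x| + (ψf μ σ) |y| - (ψf μ σ) (2*|x| + |y|) - 2*(ψf μ σ) 0 := by
    linarith [i1, i2]
  have hmonoc : (ψf μ σ) |2*x + y| ≤ (ψf μ σ) (2*|x| + |y|) :=
    hmono ⟨hc0, by linarith⟩ ⟨by positivity, hxy⟩ hcab
  have main := myLogKey ha hb hc0 hcab hxy hα.le hαM hmonoc hE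
  have hhψ : ∀ t : ℝ, h t = ψf μ σ |t| := by
    intro t
    rw [hh]
    simp only [ψf]
    congr 1
    rw [div_pow]
  have h0eq : h 0 = ψf μ σ 0 := by rw [hhψ 0, abs_zero]
  have hfeq : 2*f x + f y - f (2*x + y) =
      (2*|x| + |y| - |2*x + y|) + (2*Real.log (1 + |x|) + Real.log (1 + |y|)
        - Real.log (1 + |2*x + y|))
      + α*(2*(ψf μ σ) |x| + (ψf μ σ) |y| - (ψf μ σ) |2*x + y| - 2*(ψf μ σ) 0) := by
    rw [hf x, hf y, hf (2*x + y), hg x, hg y, hg (2*x + y), hhψ x, hhψ y, hhψ (2*x + y), h0eq]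
    ring
  rw [hfeq]
  exact main
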